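/- Let Q ⊂ ℝ^N be a bounded Lebesgue-measurable set, let p₁, …, p_N: Q → ℝ be measurable with 1 < p_i⁻ ≤ p_i(x) ≤ p_i⁺ < ∞ a.e. for each i, and let a = (a_1, …, a_N): Q × ℝ × ℝ^N → ℝ^N satisfy the growth, strict monotonicity and coercivity conditions. Fix k > 0 and let w_m, w: Q → ℝ be measurable with |w_m(x)| ≤ k for a.e. x, w_m → w a.e. in Q, and let v_m, v: Q → ℝ^N be measurable with sup_m ∫_Q Σ_{i=1}^N |v_{m,i}(x)|^{p_i(x)} dx < ∞ and ∫_Q Σ_{i=1}^N |v_i(x)|^{p_i(x)} dx < ∞. If lim_{m→∞} ∫_Q (a(x, w_m(x), v_m(x)) − a(x, w_m(x), v(x))) · (v_m(x) − v(x)) dx = 0, then along a subsequence v_m(x) → v(x) for a.e. x ∈ Q. -/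

import Mathlib

open MeasureTheory Filter ENNReal

/-- The conjugate exponent `q' = q / (q - 1)`. -/
noncomputable def conjExp (q : ℝ) : ℝ := q / (q - 1)


lemma conjExp_gt_one {q : ℝ} (hq : 1 < q) : 1 < conjExp q := by
  have h1 : 0 < q - 1 := by linarith
  rw [conjExp, lt_div_iff₀ h1]; linarith

lemma conjExp_pos {q : ℝ} (hq : 1 < q) : 0 < conjExp q :=
  lt_trans one_pos (conjExp_gt_one hq)

lemma one_div_conjExp {q : ℝ} (hq : 1 < q) : 1 / conjExp q = 1 - 1 / q := by
  have h1 : q - 1 ≠ 0 := by linarith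
  have h2 : q ≠ 0 := by linarith
  rw [conjExp, one_div_div]
  field_simp

lemma rpow_mul_abs_le {X y q : ℝ} (hX : 0 ≤ X) (hy : 0 ≤ y) (hq : 1 < q) :
    X ^ (1 - 1 / q) * y ≤ X + y ^ q := by
  have hq0 : (0:ℝ) < q := lt_trans one_pos hq
  have hyq : 0 ≤ y ^ q := Real.rpow_nonneg hy q
  rcases eq_or_lt_of_le hy with hy0 | hy0
  · rw [← hy0, mul_zero]; positivity
  set M := max X (y ^ q) with hM
  have hMX : X ≤ M := le_max_left _ _
  have hMy : y ^ q ≤ M := le_max_right _ _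
  have hM0 : 0 < M := lt_of_lt_of_le (Real.rpow_pos_of_pos hy0 q) hMy
  have he1 : (0:ℝ) ≤ 1 - 1 / q := by
    have : 1 / q < 1 := by rw [div_lt_one hq0]; linarith
    linarith
  have hy' : y = (y ^ q) ^ (q⁻¹) := by
    rw [Real.rpow_rpow_inv hy (ne_of_gt hq0)]
  have h1 : X ^ (1 - 1/q) ≤ M ^ (1 - 1/q) := Real.rpow_le_rpow hX hMX he1
  have h2 : y ≤ M ^ (q⁻¹) := by
    rw [hy']; exact Real.rpow_le_rpow hyq hMy (by positivity)
  calc X ^ (1 - 1/q) * y ≤ M ^ (1 - 1/q) * M ^ (q⁻¹) := by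
        apply mul_le_mul h1 h2 hy (Real.rpow_nonneg hM0.le _)
    _ = M ^ ((1 - 1/q) + q⁻¹) := (Real.rpow_add hM0 _ _).symm
    _ = M ^ (1:ℝ) := by congr 1; field_simp; ring
    _ = M := Real.rpow_one M
    _ ≤ X + y ^ q := max_le (by linarith) (by linarith)

lemma young_c {cc y q : ℝ} (hc : 0 ≤ cc) (hy : 0 ≤ y) (hq : 1 < q) :
    cc * y ≤ cc ^ conjExp q + y ^ q := by
  have hq' : conjExp q ≠ 0 := ne_of_gt (conjExp_pos hq)
  have hcc : 0 ≤ cc ^ conjExp q := Real.rpow_nonneg hc _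
  have key := rpow_mul_abs_le hcc hy hq
  have : (cc ^ conjExp q) ^ (1 - 1/q) = cc := by
    rw [← one_div_conjExp hq, one_div, Real.rpow_rpow_inv hc hq']
  rwa [this] at key


lemma rpow_le_linear {β δ : ℝ} (hβ0 : 0 < β) (hβ1 : β < 1) (hδ : 0 < δ) (D : ℝ) (hD : 0 ≤ D) :
    ∃ K : ℝ, ∀ t : ℝ, 0 ≤ t → D * t ^ β ≤ δ * t + K := by
  set c : ℝ := δ / (D + 1) with hc
  have hc0 : 0 < c := by positivity
  have h1β : (0:ℝ) < 1 - β := by linarith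
  refine ⟨D * c ^ (-β / (1 - β)), fun t ht => ?_⟩
  have key : t ^ β ≤ c * t + c ^ (-β / (1 - β)) := by
    have hgm := Real.geom_mean_le_arith_mean2_weighted (le_of_lt hβ0) (by linarith : (0:ℝ) ≤ 1 - β)
      (by positivity : (0:ℝ) ≤ c * t) (by positivity : (0:ℝ) ≤ c ^ (-β / (1 - β)))
      (by ring : β + (1 - β) = 1)
    have hid : (c * t) ^ β * (c ^ (-β / (1 - β))) ^ (1 - β) = t ^ β := by
      rw [Real.mul_rpow hc0.le ht, ← Real.rpow_mul hc0.le,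
        div_mul_cancel₀ _ (ne_of_gt h1β), mul_comm (c ^ β) (t ^ β), mul_assoc,
        ← Real.rpow_add hc0]
      simp
    calc t ^ β = (c * t) ^ β * (c ^ (-β / (1 - β))) ^ (1 - β) := hid.symm
      _ ≤ β * (c * t) + (1 - β) * c ^ (-β / (1 - β)) := hgm
      _ ≤ c * t + c ^ (-β / (1 - β)) := by
          have h1 : β * (c * t) ≤ c * t := by nlinarith [mul_nonneg hc0.le ht]
          have h2 : (1 - β) * c ^ (-β / (1 - β)) ≤ c ^ (-β / (1 - β)) := by
            nlinarith [Real.rpow_nonneg hc0.le (-β / (1 - β))]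
          linarith
  have hDc : D * c ≤ δ := by
    have hd1 : D / (D + 1) ≤ 1 := div_le_one_of_le₀ (by linarith) (by positivity)
    have heq : D * c = (D / (D + 1)) * δ := by rw [hc]; ring
    rw [heq]; nlinarith
  calc D * t ^ β ≤ D * (c * t + c ^ (-β / (1 - β))) :=
        mul_le_mul_of_nonneg_left key hD
    _ = (D * c) * t + D * c ^ (-β / (1 - β)) := by ring
    _ ≤ δ * t + D * c ^ (-β / (1 - β)) := by
        have := mul_le_mul_of_nonneg_right hDc ht
        linarith

lemma bound_from_ineq {ι : Type*} [Fintype ι] (α G : ℝ) (hα : 0 < α)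
    (D : ι → ℝ) (hD : ∀ j, 0 ≤ D j)
    (β : ι → ℝ) (hβ0 : ∀ j, 0 < β j) (hβ1 : ∀ j, β j < 1) :
    ∃ R : ℝ, ∀ t : ℝ, 0 ≤ t → α * t ≤ G + ∑ j, D j * t ^ β j → t ≤ R := by
  set n : ℕ := Fintype.card ι with hn
  set δ : ℝ := α / (2 * (n + 1)) with hδ
  have hδ0 : 0 < δ := by positivity
  have hchoice : ∀ j : ι, ∃ K : ℝ, ∀ t : ℝ, 0 ≤ t → D j * t ^ β j ≤ δ * t + K :=
    fun j => rpow_le_linear (hβ0 j) (hβ1 j) hδ0 (D j) (hD j)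
  choose K hK using hchoice
  refine ⟨(G + ∑ j, K j) / (α / 2), fun t ht hineq => ?_⟩
  have hsum : ∑ j, D j * t ^ β j ≤ (n : ℝ) * (δ * t) + ∑ j, K j := by
    calc ∑ j, D j * t ^ β j ≤ ∑ j, (δ * t + K j) := Finset.sum_le_sum fun j _ => hK j t ht
      _ = (n : ℝ) * (δ * t) + ∑ j, K j := by
          rw [Finset.sum_add_distrib, Finset.sum_const, Finset.card_univ, nsmul_eq_mul]
  have hnδ : (n : ℝ) * δ ≤ α / 2 := by
    have hn0 : (0:ℝ) ≤ (n:ℝ) := Nat.cast_nonneg n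
    rw [hδ, ← mul_div_assoc, div_le_div_iff₀ (by positivity) (by norm_num)]
    nlinarith
  have h2 : (α / 2) * t ≤ G + ∑ j, K j := by
    have := mul_le_mul_of_nonneg_right hnδ ht
    nlinarith
  rw [le_div_iff₀ (by positivity : (0:ℝ) < α / 2)]
  nlinarith

open Filter Topology in
lemma ptwise {N : ℕ} (p e : Fin N → ℝ) (hp : ∀ i, 1 < p i)
    (he0 : ∀ i, 0 < e i) (he1 : ∀ i, e i < 1)
    (a : ℝ → (Fin N → ℝ) → Fin N → ℝ)
    (hcont : Continuous fun sξ : ℝ × (Fin N → ℝ) => a sξ.1 sξ.2)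
    (k : ℝ) (K C : Fin N → ℝ) (hK : ∀ i, 0 ≤ K i) (hC : ∀ i, 0 ≤ C i)
    (hgrowth : ∀ s : ℝ, |s| ≤ k → ∀ (ξ : Fin N → ℝ) (i : Fin N),
      |a s ξ i| ≤ K i * ((∑ j, |ξ j| ^ p j) ^ e i + C i))
    (hmono : ∀ (s : ℝ) (ξ ξ' : Fin N → ℝ), ξ ≠ ξ' →
      0 < ∑ i, (a s ξ i - a s ξ' i) * (ξ i - ξ' i))
    (α : ℝ) (hα : 0 < α)
    (hcoer : ∀ (s : ℝ) (ξ : Fin N → ℝ), α * ∑ i, |ξ i| ^ p i ≤ ∑ i, a s ξ i * ξ i)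
    (s : ℕ → ℝ) (hs : ∀ m, |s m| ≤ k) (slim : ℝ)
    (hslim : Tendsto s atTop (𝓝 slim))
    (ξ : ℕ → Fin N → ℝ) (ξl : Fin N → ℝ)
    (hg : Tendsto (fun m => ∑ i, (a (s m) (ξ m) i - a (s m) ξl i) * (ξ m i - ξl i))
      atTop (𝓝 0)) :
    Tendsto ξ atTop (𝓝 ξl) := by
  set g : ℕ → ℝ := fun m => ∑ i, (a (s m) (ξ m) i - a (s m) ξl i) * (ξ m i - ξl i) with hgdef
  set S : ℕ → ℝ := fun m => ∑ i, |ξ m i| ^ p i with hSdef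
  have hS0 : ∀ m, 0 ≤ S m := fun m =>
    Finset.sum_nonneg fun i _ => Real.rpow_nonneg (abs_nonneg _) _
  have hSi : ∀ m i, |ξ m i| ^ p i ≤ S m := fun m i =>
    Finset.single_le_sum (fun j _ => Real.rpow_nonneg (abs_nonneg _) _) (Finset.mem_univ i)
  have hp0 : ∀ i, (0:ℝ) < p i := fun i => lt_trans one_pos (hp i)
  have hξi : ∀ m i, |ξ m i| ≤ S m ^ (p i)⁻¹ := by
    intro m i
    have h := Real.rpow_le_rpow (Real.rpow_nonneg (abs_nonneg _) _) (hSi m i)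
      (inv_nonneg.mpr (hp0 i).le)
    rwa [Real.rpow_rpow_inv (abs_nonneg _) (ne_of_gt (hp0 i))] at h
  -- bound on `a (s m) ξl`
  have hbtend : Tendsto (fun m => a (s m) ξl) atTop (𝓝 (a slim ξl)) :=
    (hcont.tendsto (slim, ξl)).comp (hslim.prodMk_nhds tendsto_const_nhds)
  obtain ⟨M, hM⟩ := hbtend.norm.bddAbove_range
  have hM' : ∀ m i, |a (s m) ξl i| ≤ M := fun m i => by
    have h1 : ‖a (s m) ξl i‖ ≤ ‖a (s m) ξl‖ := norm_le_pi_norm _ i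
    have h2 : ‖a (s m) ξl‖ ≤ M := hM (Set.mem_range_self m)
    calc |a (s m) ξl i| = ‖a (s m) ξl i‖ := (Real.norm_eq_abs _).symm
      _ ≤ M := le_trans h1 h2
  have hM0 : 0 ≤ M := le_trans (norm_nonneg _) (hM (Set.mem_range_self 0))
  obtain ⟨G, hG⟩ := hg.bddAbove_range
  have hGbd : ∀ m, g m ≤ G := fun m => hG (Set.mem_range_self m)
  -- key inequality giving boundedness of `S`
  obtain ⟨R, hR⟩ := bound_from_ineq (ι := Fin N ⊕ Fin N) α
    (G + ∑ i, (K i * C i * |ξl i| + M * |ξl i|)) hα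
    (Sum.elim (fun i => K i * |ξl i|) (fun _ => M))
    (by rintro (i | i)
        · exact mul_nonneg (hK i) (abs_nonneg _)
        · exact hM0)
    (Sum.elim e (fun i => (p i)⁻¹))
    (by rintro (i | i)
        · exact he0 i
        · exact inv_pos.mpr (hp0 i))
    (by rintro (i | i)
        · exact he1 i
        · exact inv_lt_one_of_one_lt₀ (hp i))
  have hSR : ∀ m, S m ≤ R := by
    intro m
    apply hR (S m) (hS0 m)
    rw [Fintype.sum_sum_type]
    simp only [Sum.elim_inl, Sum.elim_inr]
    have hdecomp : ∑ i, a (s m) (ξ m) i * ξ m i =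
        g m + ∑ i, a (s m) (ξ m) i * ξl i + ∑ i, a (s m) ξl i * (ξ m i - ξl i) := by
      rw [hgdef]
      rw [← Finset.sum_add_distrib, ← Finset.sum_add_distrib]
      apply Finset.sum_congr rfl
      intro i _; ring
    have h1 : ∀ i, a (s m) (ξ m) i * ξl i ≤ K i * |ξl i| * S m ^ e i + K i * C i * |ξl i| := by
      intro i
      calc a (s m) (ξ m) i * ξl i ≤ |a (s m) (ξ m) i * ξl i| := le_abs_self _
        _ = |a (s m) (ξ m) i| * |ξl i| := abs_mul _ _
        _ ≤ (K i * (S m ^ e i + C i)) * |ξl i| :=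
            mul_le_mul_of_nonneg_right (hgrowth (s m) (hs m) (ξ m) i) (abs_nonneg _)
        _ = K i * |ξl i| * S m ^ e i + K i * C i * |ξl i| := by ring
    have h2 : ∀ i, a (s m) ξl i * (ξ m i - ξl i) ≤ M * S m ^ (p i)⁻¹ + M * |ξl i| := by
      intro i
      calc a (s m) ξl i * (ξ m i - ξl i) ≤ |a (s m) ξl i * (ξ m i - ξl i)| := le_abs_self _
        _ = |a (s m) ξl i| * |ξ m i - ξl i| := abs_mul _ _
        _ ≤ M * (|ξ m i| + |ξl i|) := by
            apply mul_le_mul (hM' m i) (abs_sub _ _) (abs_nonneg _) hM0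
        _ ≤ M * (S m ^ (p i)⁻¹ + |ξl i|) := by
            apply mul_le_mul_of_nonneg_left _ hM0
            have := hξi m i
            linarith
        _ = M * S m ^ (p i)⁻¹ + M * |ξl i| := by ring
    have hsum1 : ∑ i, a (s m) (ξ m) i * ξl i ≤
        ∑ i, (K i * |ξl i|) * S m ^ e i + ∑ i, K i * C i * |ξl i| := by
      rw [← Finset.sum_add_distrib]
      exact Finset.sum_le_sum fun i _ => h1 i
    have hsum2 : ∑ i, a (s m) ξl i * (ξ m i - ξl i) ≤
        ∑ i, M * S m ^ (p i)⁻¹ + ∑ i, M * |ξl i| := by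
      rw [← Finset.sum_add_distrib]
      exact Finset.sum_le_sum fun i _ => h2 i
    have hco := hcoer (s m) (ξ m)
    rw [hdecomp] at hco
    have hsplit : ∑ i, (K i * C i * |ξl i| + M * |ξl i|) =
        ∑ i, K i * C i * |ξl i| + ∑ i, M * |ξl i| := Finset.sum_add_distrib
    have hgm := hGbd m
    rw [hsplit]
    linarith
  -- boundedness of `ξ`
  set R' : ℝ := max 1 R with hR'def
  have hR'1 : (1:ℝ) ≤ R' := le_max_left _ _
  have hR'0 : (0:ℝ) ≤ R' := le_trans zero_le_one hR'1
  have hξbd : ∀ m, ξ m ∈ Metric.closedBall (0 : Fin N → ℝ) R' := by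
    intro m
    rw [Metric.mem_closedBall, dist_zero_right]
    rw [pi_norm_le_iff_of_nonneg hR'0]
    intro i
    rw [Real.norm_eq_abs]
    calc |ξ m i| ≤ S m ^ (p i)⁻¹ := hξi m i
      _ ≤ R' ^ (p i)⁻¹ := Real.rpow_le_rpow (hS0 m)
          (le_trans (hSR m) (le_max_right _ _)) (inv_nonneg.mpr (hp0 i).le)
      _ ≤ R' ^ (1:ℝ) := Real.rpow_le_rpow_of_exponent_le hR'1
          (by rw [inv_le_one_iff₀]; right; exact (hp i).le)
      _ = R' := Real.rpow_one _
  -- subsequence argument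
  apply tendsto_of_subseq_tendsto
  intro ns hns
  obtain ⟨ξstar, -, φ, hφmono, hφtend⟩ :=
    tendsto_subseq_of_bounded (Metric.isBounded_closedBall (x := (0 : Fin N → ℝ)) (r := R'))
      (fun j => hξbd (ns j))
  refine ⟨φ, ?_⟩
  have hcomp : Tendsto (fun j => ns (φ j)) atTop atTop := hns.comp hφmono.tendsto_atTop
  have hsn : Tendsto (fun j => s (ns (φ j))) atTop (𝓝 slim) := hslim.comp hcomp
  have hgn : Tendsto (fun j => g (ns (φ j))) atTop (𝓝 0) := hg.comp hcomp
  have hξn : Tendsto (fun j => ξ (ns (φ j))) atTop (𝓝 ξstar) := hφtend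
  have hA : Tendsto (fun j => a (s (ns (φ j))) (ξ (ns (φ j)))) atTop (𝓝 (a slim ξstar)) :=
    (hcont.tendsto (slim, ξstar)).comp (hsn.prodMk_nhds hξn)
  have hB : Tendsto (fun j => a (s (ns (φ j))) ξl) atTop (𝓝 (a slim ξl)) :=
    (hcont.tendsto (slim, ξl)).comp (hsn.prodMk_nhds tendsto_const_nhds)
  have hglim : Tendsto (fun j => g (ns (φ j))) atTop
      (𝓝 (∑ i, (a slim ξstar i - a slim ξl i) * (ξstar i - ξl i))) := by
    apply tendsto_finset_sum
    intro i _
    exact ((tendsto_pi_nhds.mp hA i).sub (tendsto_pi_nhds.mp hB i)).mul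
      ((tendsto_pi_nhds.mp hξn i).sub tendsto_const_nhds)
  have hzero : ∑ i, (a slim ξstar i - a slim ξl i) * (ξstar i - ξl i) = 0 :=
    tendsto_nhds_unique hglim hgn
  have hxx : ξstar = ξl := by
    by_contra hne
    exact absurd hzero.symm (ne_of_lt (hmono slim ξstar ξl hne))
  rw [hxx] at hξn
  exact hξn

lemma subseq_ae_zero {X : Type*} [MeasurableSpace X] (μ : Measure X) (g : ℕ → X → ℝ)
    (hmeas : ∀ m, AEMeasurable (g m) μ) (hnn : ∀ m, ∀ᵐ x ∂μ, 0 ≤ g m x)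
    (hfin : ∀ m, ∫⁻ x, ENNReal.ofReal (g m x) ∂μ ≠ ⊤)
    (hlim : Tendsto (fun m => ∫ x, g m x ∂μ) atTop (nhds 0)) :
    ∃ φ : ℕ → ℕ, StrictMono φ ∧
      ∀ᵐ x ∂μ, Tendsto (fun n => g (φ n) x) atTop (nhds 0) := by
  have hIeq : ∀ m, ∫ x, g m x ∂μ = (∫⁻ x, ENNReal.ofReal (g m x) ∂μ).toReal := fun m =>
    integral_eq_lintegral_of_nonneg_ae (hnn m) (hmeas m).aestronglyMeasurable
  have hItend : Tendsto (fun m => ∫⁻ x, ENNReal.ofReal (g m x) ∂μ) atTop (nhds 0) := by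
    have heq : (fun m => (∫⁻ x, ENNReal.ofReal (g m x) ∂μ).toReal) =
        fun m => ∫ x, g m x ∂μ := funext fun m => (hIeq m).symm
    exact (ENNReal.tendsto_toReal_iff hfin (by simp : (0:ℝ≥0∞) ≠ ⊤)).mp
      (by rw [heq, ENNReal.toReal_zero]; exact hlim)
  have hev : ∀ n : ℕ, ∀ᶠ m in atTop, ∫⁻ x, ENNReal.ofReal (g m x) ∂μ < (2:ℝ≥0∞)⁻¹ ^ n := by
    intro n
    have hpos : (0:ℝ≥0∞) < (2:ℝ≥0∞)⁻¹ ^ n :=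
      ENNReal.pow_pos (ENNReal.inv_pos.mpr ENNReal.ofNat_ne_top) n
    exact hItend (Iio_mem_nhds hpos)
  obtain ⟨φ, hφmono, hφlt⟩ := Filter.extraction_forall_of_eventually hev
  have hgeo : (∑' n : ℕ, (2:ℝ≥0∞)⁻¹ ^ n) = 2 := by
    rw [ENNReal.tsum_geometric, ENNReal.one_sub_inv_two, inv_inv]
  have htsum : ∑' n, ∫⁻ x, ENNReal.ofReal (g (φ n) x) ∂μ ≠ ⊤ := by
    have hle : ∑' n, ∫⁻ x, ENNReal.ofReal (g (φ n) x) ∂μ ≤ ∑' n : ℕ, (2:ℝ≥0∞)⁻¹ ^ n :=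
      ENNReal.tsum_le_tsum fun n => (hφlt n).le
    rw [hgeo] at hle
    exact ne_top_of_le_ne_top ENNReal.ofNat_ne_top hle
  have hmeas' : ∀ n, AEMeasurable (fun x => ENNReal.ofReal (g (φ n) x)) μ := fun n =>
    (hmeas (φ n)).ennreal_ofReal
  have hlint : ∫⁻ x, (∑' n, ENNReal.ofReal (g (φ n) x)) ∂μ ≠ ⊤ := by
    rw [lintegral_tsum hmeas']
    exact htsum
  have hae : ∀ᵐ x ∂μ, (∑' n, ENNReal.ofReal (g (φ n) x)) < ⊤ :=
    ae_lt_top' (AEMeasurable.ennreal_tsum hmeas') hlint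
  refine ⟨φ, hφmono, ?_⟩
  filter_upwards [hae, ae_all_iff.mpr hnn] with x hx hxnn
  have h0 : Tendsto (fun n => ENNReal.ofReal (g (φ n) x)) atTop (nhds 0) :=
    ENNReal.tendsto_atTop_zero_of_tsum_ne_top hx.ne
  have h1 := (ENNReal.tendsto_toReal (by simp : (0:ℝ≥0∞) ≠ ⊤)).comp h0
  have heq : (fun n => (ENNReal.ofReal (g (φ n) x)).toReal) = fun n => g (φ n) x :=
    funext fun n => ENNReal.toReal_ofReal (hxnn (φ n))
  rw [show ENNReal.toReal ∘ (fun n => ENNReal.ofReal (g (φ n) x)) =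
    fun n => (ENNReal.ofReal (g (φ n) x)).toReal from rfl, heq, ENNReal.toReal_zero] at h1
  exact h1

lemma ofReal_sum_le {ι : Type*} (s : Finset ι) (f : ι → ℝ) :
    ENNReal.ofReal (∑ i ∈ s, f i) ≤ ∑ i ∈ s, ENNReal.ofReal (f i) := by
  induction s using Finset.cons_induction with
  | empty => simp
  | cons i s hi ih =>
      rw [Finset.sum_cons, Finset.sum_cons]
      exact le_trans ENNReal.ofReal_add_le (by gcongr)

lemma comp_aemeasurable {N : ℕ} {μ : Measure (Fin N → ℝ)}
    (a : (Fin N → ℝ) → ℝ → (Fin N → ℝ) → (Fin N → ℝ))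
    (ha_meas : ∀ (s : ℝ) (ξ : Fin N → ℝ), Measurable (fun x => a x s ξ))
    (ha_cont : ∀ᵐ x ∂μ, Continuous (fun sξ : ℝ × (Fin N → ℝ) => a x sξ.1 sξ.2))
    {z : (Fin N → ℝ) → ℝ} (hz : Measurable z)
    {ζ : (Fin N → ℝ) → (Fin N → ℝ)} (hζ : Measurable ζ) :
    AEMeasurable (fun x => a x (z x) (ζ x)) μ := by
  set T := {x | ¬ Continuous (fun sξ : ℝ × (Fin N → ℝ) => a x sξ.1 sξ.2)} with hT
  have hT0 : μ T = 0 := ha_cont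
  set E := toMeasurable μ T with hE
  have hEmeas : MeasurableSet E := measurableSet_toMeasurable μ T
  have hE0 : μ E = 0 := by rw [hE, measure_toMeasurable]; exact hT0
  classical
  set u : (ℝ × (Fin N → ℝ)) → (Fin N → ℝ) → (Fin N → ℝ) :=
    fun sξ => E.piecewise (fun _ => 0) (fun x => a x sξ.1 sξ.2) with hu
  have hu_cont : ∀ x, Continuous fun sξ => u sξ x := by
    intro x
    by_cases hx : x ∈ E
    · simp only [hu, Set.piecewise_eq_of_mem _ _ _ hx]; exact continuous_const
    · simp only [hu, Set.piecewise_eq_of_notMem _ _ _ hx]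
      have hxT : x ∉ T := fun h => hx (subset_toMeasurable μ T h)
      rw [hT, Set.mem_setOf_eq, not_not] at hxT
      exact hxT
  have hu_meas : ∀ sξ, Measurable (u sξ) := fun sξ =>
    Measurable.piecewise hEmeas measurable_const (ha_meas sξ.1 sξ.2)
  have huncurry : Measurable (Function.uncurry u) :=
    measurable_uncurry_of_continuous_of_measurable hu_cont hu_meas
  have hcomp : Measurable (fun x => u (z x, ζ x) x) := by
    have heq : (fun x => u (z x, ζ x) x) =
        (Function.uncurry u) ∘ (fun x => ((z x, ζ x), x)) := rfl
    rw [heq]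
    exact huncurry.comp ((hz.prodMk hζ).prodMk measurable_id)
  refine ⟨fun x => u (z x, ζ x) x, hcomp, ?_⟩
  have haeE : ∀ᵐ x ∂μ, x ∉ E := by
    rw [ae_iff]
    simpa using hE0
  filter_upwards [haeE] with x hx
  simp only [hu, Set.piecewise_eq_of_notMem _ _ _ hx]

/-- first conclusion of Lemma 2.2 of the paper: a.e. convergence of the
(abstract) gradients.  Under the Leray–Lions structure conditions (growth, strict
monotonicity, coercivity) on `a`, if `w m → w` a.e. with `|w m| ≤ k`, the fields `v m`
are bounded in the anisotropic modular, and
`∫_Q (a(x, w m, v m) − a(x, w m, v))·(v m − v) → 0`, then along a subsequence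
`v m → v` a.e. in `Q`. -/
theorem stmt_2 {N : ℕ} (Q : Set (Fin N → ℝ)) (hQmeas : MeasurableSet Q)
    (hQbd : Bornology.IsBounded Q)
    (p : Fin N → (Fin N → ℝ) → ℝ) (hp : ∀ i, Measurable (p i))
    (pm pM : Fin N → ℝ) (hpm : ∀ i, 1 < pm i)
    (hpb : ∀ᵐ x ∂(volume.restrict Q), ∀ i, pm i ≤ p i x ∧ p i x ≤ pM i)
    (a : (Fin N → ℝ) → ℝ → (Fin N → ℝ) → (Fin N → ℝ))
    (ha_meas : ∀ (s : ℝ) (ξ : Fin N → ℝ), Measurable (fun x => a x s ξ))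
    (ha_cont : ∀ᵐ x ∂(volume.restrict Q),
      Continuous (fun sξ : ℝ × (Fin N → ℝ) => a x sξ.1 sξ.2))
    (ahat : Fin N → ℝ → ℝ) (hahat_cont : ∀ i, Continuous (ahat i))
    (hahat_mono : ∀ i, MonotoneOn (ahat i) (Set.Ici 0))
    (hahat_pos : ∀ i, ∀ t : ℝ, 0 ≤ t → 0 < ahat i t)
    (c : Fin N → (Fin N → ℝ) → ℝ) (hc_meas : ∀ i, Measurable (c i))
    (hc_nonneg : ∀ i, ∀ᵐ x ∂(volume.restrict Q), 0 ≤ c i x)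
    (hc_int : ∀ i, ∫⁻ x in Q, ENNReal.ofReal (c i x ^ conjExp (p i x)) < ⊤)
    (hgrowth : ∀ᵐ x ∂(volume.restrict Q), ∀ (s : ℝ) (ξ : Fin N → ℝ) (i : Fin N),
      |a x s ξ i| ≤ ahat i |s| *
        ((∑ j, |ξ j| ^ p j x) ^ (1 / conjExp (p i x)) + c i x))
    (hmono : ∀ᵐ x ∂(volume.restrict Q), ∀ (s : ℝ) (ξ ξ' : Fin N → ℝ), ξ ≠ ξ' →
      0 < ∑ i, (a x s ξ i - a x s ξ' i) * (ξ i - ξ' i))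
    (α : ℝ) (hα : 0 < α)
    (hcoer : ∀ᵐ x ∂(volume.restrict Q), ∀ (s : ℝ) (ξ : Fin N → ℝ),
      α * ∑ i, |ξ i| ^ p i x ≤ ∑ i, a x s ξ i * ξ i)
    (k : ℝ) (hk : 0 < k)
    (w : ℕ → (Fin N → ℝ) → ℝ) (hw_meas : ∀ m, Measurable (w m))
    (wlim : (Fin N → ℝ) → ℝ) (hwlim_meas : Measurable wlim)
    (hw_bd : ∀ m, ∀ᵐ x ∂(volume.restrict Q), |w m x| ≤ k)
    (hw_ae : ∀ᵐ x ∂(volume.restrict Q),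
      Tendsto (fun m => w m x) atTop (nhds (wlim x)))
    (v : ℕ → (Fin N → ℝ) → Fin N → ℝ) (hv_meas : ∀ m, Measurable (v m))
    (vlim : (Fin N → ℝ) → Fin N → ℝ) (hvlim_meas : Measurable vlim)
    (B : ℝ≥0∞) (hB : B < ⊤)
    (hv_mod : ∀ m, ∫⁻ x in Q, ENNReal.ofReal (∑ i, |v m x i| ^ p i x) ≤ B)
    (hvlim_mod : ∫⁻ x in Q, ENNReal.ofReal (∑ i, |vlim x i| ^ p i x) < ⊤)
    (hlim : Tendsto (fun m => ∫ x in Q,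
        ∑ i, (a x (w m x) (v m x) i - a x (w m x) (vlim x) i) * (v m x i - vlim x i))
      atTop (nhds 0)) :
    ∃ φ : ℕ → ℕ, StrictMono φ ∧
      ∀ᵐ x ∂(volume.restrict Q),
        Tendsto (fun m => v (φ m) x) atTop (nhds (vlim x)) := by
  classical
  have hKs0 : (0:ℝ) ≤ ∑ i, ahat i k := Finset.sum_nonneg fun i _ => (hahat_pos i k hk.le).le
  -- measurability
  have hconjmeas : ∀ i, Measurable fun x => conjExp (p i x) := fun i =>
    (hp i).div ((hp i).sub measurable_const)
  have hSmeas : ∀ m, Measurable fun x => ∑ i, |v m x i| ^ p i x := fun m =>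
    Finset.measurable_sum _ fun i _ =>
      (((measurable_pi_apply i).comp (hv_meas m)).abs).pow (hp i)
  have hSlmeas : Measurable fun x => ∑ i, |vlim x i| ^ p i x :=
    Finset.measurable_sum _ fun i _ =>
      (((measurable_pi_apply i).comp hvlim_meas).abs).pow (hp i)
  have hTmeas : ∀ i, Measurable fun x => c i x ^ conjExp (p i x) := fun i =>
    (hc_meas i).pow (hconjmeas i)
  have hAmeas : ∀ m, AEMeasurable (fun x => a x (w m x) (v m x)) (volume.restrict Q) :=
    fun m => comp_aemeasurable a ha_meas ha_cont (hw_meas m) (hv_meas m)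
  have hBmeas : ∀ m, AEMeasurable (fun x => a x (w m x) (vlim x)) (volume.restrict Q) :=
    fun m => comp_aemeasurable a ha_meas ha_cont (hw_meas m) hvlim_meas
  have hgmeas : ∀ m, AEMeasurable (fun x =>
      ∑ i, (a x (w m x) (v m x) i - a x (w m x) (vlim x) i) * (v m x i - vlim x i))
      (volume.restrict Q) := fun m =>
    Finset.aemeasurable_fun_sum _ fun i _ =>
      ((((measurable_pi_apply i).comp_aemeasurable (hAmeas m)).sub
        ((measurable_pi_apply i).comp_aemeasurable (hBmeas m))).mul
        ((((measurable_pi_apply i).comp (hv_meas m)).sub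
          ((measurable_pi_apply i).comp hvlim_meas)).aemeasurable))
  -- nonnegativity of the integrands
  have hgnn : ∀ m, ∀ᵐ x ∂(volume.restrict Q), 0 ≤
      ∑ i, (a x (w m x) (v m x) i - a x (w m x) (vlim x) i) * (v m x i - vlim x i) := by
    intro m
    filter_upwards [hmono] with x hx
    by_cases hv : v m x = vlim x
    · apply le_of_eq
      symm
      apply Finset.sum_eq_zero
      intro i _
      rw [hv]
      ring
    · exact (hx (w m x) (v m x) (vlim x) hv).le
  -- a.e. pointwise bound
  have hg_bd : ∀ m, ∀ᵐ x ∂(volume.restrict Q),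
      |∑ i, (a x (w m x) (v m x) i - a x (w m x) (vlim x) i) * (v m x i - vlim x i)|
        ≤ (6 * ∑ i, ahat i k) * ((∑ i, |v m x i| ^ p i x) + (∑ i, |vlim x i| ^ p i x)
            + ∑ i, c i x ^ conjExp (p i x)) := by
    intro m
    filter_upwards [hgrowth, hpb, ae_all_iff.mpr hc_nonneg, hw_bd m] with x hgr hpbx hcx hwx
    set Sm := ∑ i, |v m x i| ^ p i x with hSm
    set SL := ∑ i, |vlim x i| ^ p i x with hSL
    have hq : ∀ i, 1 < p i x := fun i => lt_of_lt_of_le (hpm i) (hpbx i).1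
    have hSm0 : 0 ≤ Sm := Finset.sum_nonneg fun i _ => Real.rpow_nonneg (abs_nonneg _) _
    have hSL0 : 0 ≤ SL := Finset.sum_nonneg fun i _ => Real.rpow_nonneg (abs_nonneg _) _
    have hT0 : ∀ i, 0 ≤ c i x ^ conjExp (p i x) := fun i => Real.rpow_nonneg (hcx i) _
    have hTs0 : 0 ≤ ∑ i, c i x ^ conjExp (p i x) := Finset.sum_nonneg fun i _ => hT0 i
    have hKx : ∀ i, ahat i |w m x| ≤ ahat i k := fun i =>
      hahat_mono i (Set.mem_Ici.mpr (abs_nonneg _)) (Set.mem_Ici.mpr hk.le) hwx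
    have hK0 : ∀ i, 0 ≤ ahat i k := fun i => (hahat_pos i k hk.le).le
    have husq : ∀ i, |v m x i| ^ p i x ≤ Sm := fun i =>
      Finset.single_le_sum (f := fun i => |v m x i| ^ p i x)
        (fun j _ => Real.rpow_nonneg (abs_nonneg _) _) (Finset.mem_univ i)
    have hzsq : ∀ i, |vlim x i| ^ p i x ≤ SL := fun i =>
      Finset.single_le_sum (f := fun i => |vlim x i| ^ p i x)
        (fun j _ => Real.rpow_nonneg (abs_nonneg _) _) (Finset.mem_univ i)
    have hterm : ∀ i : Fin N,
        |(a x (w m x) (v m x) i - a x (w m x) (vlim x) i) * (v m x i - vlim x i)|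
          ≤ ahat i k * (6 * Sm + 6 * SL + 4 * (c i x ^ conjExp (p i x))) := by
      intro i
      have hXnn : (0:ℝ) ≤ Sm ^ (1 - 1 / p i x) := Real.rpow_nonneg hSm0 _
      have hYnn : (0:ℝ) ≤ SL ^ (1 - 1 / p i x) := Real.rpow_nonneg hSL0 _
      have hA : |a x (w m x) (v m x) i| ≤ ahat i k * (Sm ^ (1 - 1 / p i x) + c i x) := by
        have h1 := hgr (w m x) (v m x) i
        rw [one_div_conjExp (hq i)] at h1
        exact h1.trans (mul_le_mul_of_nonneg_right (hKx i) (by linarith [hcx i]))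
      have hB' : |a x (w m x) (vlim x) i| ≤ ahat i k * (SL ^ (1 - 1 / p i x) + c i x) := by
        have h1 := hgr (w m x) (vlim x) i
        rw [one_div_conjExp (hq i)] at h1
        exact h1.trans (mul_le_mul_of_nonneg_right (hKx i) (by linarith [hcx i]))
      have p1 : Sm ^ (1 - 1 / p i x) * |v m x i| ≤ Sm + Sm :=
        (rpow_mul_abs_le hSm0 (abs_nonneg _) (hq i)).trans (by linarith [husq i])
      have p2 : Sm ^ (1 - 1 / p i x) * |vlim x i| ≤ Sm + SL :=
        (rpow_mul_abs_le hSm0 (abs_nonneg _) (hq i)).trans (by linarith [hzsq i])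
      have p3 : SL ^ (1 - 1 / p i x) * |v m x i| ≤ SL + Sm :=
        (rpow_mul_abs_le hSL0 (abs_nonneg _) (hq i)).trans (by linarith [husq i])
      have p4 : SL ^ (1 - 1 / p i x) * |vlim x i| ≤ SL + SL :=
        (rpow_mul_abs_le hSL0 (abs_nonneg _) (hq i)).trans (by linarith [hzsq i])
      have p5 : c i x * |v m x i| ≤ c i x ^ conjExp (p i x) + Sm :=
        (young_c (hcx i) (abs_nonneg _) (hq i)).trans (by linarith [husq i])
      have p6 : c i x * |vlim x i| ≤ c i x ^ conjExp (p i x) + SL :=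
        (young_c (hcx i) (abs_nonneg _) (hq i)).trans (by linarith [hzsq i])
      have habs : |(a x (w m x) (v m x) i - a x (w m x) (vlim x) i) * (v m x i - vlim x i)|
          ≤ (|a x (w m x) (v m x) i| + |a x (w m x) (vlim x) i|) * (|v m x i| + |vlim x i|) := by
        rw [abs_mul]
        exact mul_le_mul (abs_sub _ _) (abs_sub _ _) (abs_nonneg _)
          (by positivity)
      have hstep2 : (|a x (w m x) (v m x) i| + |a x (w m x) (vlim x) i|) *
            (|v m x i| + |vlim x i|)
          ≤ (ahat i k * ((Sm ^ (1 - 1 / p i x) + c i x) + (SL ^ (1 - 1 / p i x) + c i x))) *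
            (|v m x i| + |vlim x i|) := by
        apply mul_le_mul_of_nonneg_right _ (by positivity)
        calc |a x (w m x) (v m x) i| + |a x (w m x) (vlim x) i|
            ≤ ahat i k * (Sm ^ (1 - 1 / p i x) + c i x)
              + ahat i k * (SL ^ (1 - 1 / p i x) + c i x) := add_le_add hA hB'
          _ = ahat i k * ((Sm ^ (1 - 1 / p i x) + c i x) + (SL ^ (1 - 1 / p i x) + c i x)) := by
              ring
      have hstep3 : (ahat i k * ((Sm ^ (1 - 1 / p i x) + c i x) + (SL ^ (1 - 1 / p i x) + c i x))) *
            (|v m x i| + |vlim x i|)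
          ≤ ahat i k * (6 * Sm + 6 * SL + 4 * (c i x ^ conjExp (p i x))) := by
        have hexp : (ahat i k * ((Sm ^ (1 - 1 / p i x) + c i x) + (SL ^ (1 - 1 / p i x) + c i x))) *
              (|v m x i| + |vlim x i|)
            = ahat i k * (Sm ^ (1 - 1 / p i x) * |v m x i| + Sm ^ (1 - 1 / p i x) * |vlim x i|
              + SL ^ (1 - 1 / p i x) * |v m x i| + SL ^ (1 - 1 / p i x) * |vlim x i|
              + (c i x * |v m x i| + c i x * |vlim x i|)
              + (c i x * |v m x i| + c i x * |vlim x i|)) := by ring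
        rw [hexp]
        exact mul_le_mul_of_nonneg_left (by linarith) (hK0 i)
      exact habs.trans (hstep2.trans hstep3)
    calc |∑ i, (a x (w m x) (v m x) i - a x (w m x) (vlim x) i) * (v m x i - vlim x i)|
        ≤ ∑ i, |(a x (w m x) (v m x) i - a x (w m x) (vlim x) i) * (v m x i - vlim x i)| :=
          Finset.abs_sum_le_sum_abs _ _
      _ ≤ ∑ i, ahat i k * (6 * Sm + 6 * SL + 4 * (c i x ^ conjExp (p i x))) :=
          Finset.sum_le_sum fun i _ => hterm i
      _ = (6 * Sm + 6 * SL) * (∑ i, ahat i k)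
            + 4 * ∑ i, ahat i k * (c i x ^ conjExp (p i x)) := by
          rw [Finset.sum_congr rfl (fun i _ => by ring :
            ∀ i ∈ Finset.univ, ahat i k * (6 * Sm + 6 * SL + 4 * (c i x ^ conjExp (p i x)))
              = (6 * Sm + 6 * SL) * ahat i k + 4 * (ahat i k * (c i x ^ conjExp (p i x)))),
            Finset.sum_add_distrib, ← Finset.mul_sum, ← Finset.mul_sum]
      _ ≤ (6 * ∑ i, ahat i k) * (Sm + SL + ∑ i, c i x ^ conjExp (p i x)) := by
          have hKT : ∑ i, ahat i k * (c i x ^ conjExp (p i x))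
              ≤ (∑ i, ahat i k) * ∑ i, c i x ^ conjExp (p i x) := by
            calc ∑ i, ahat i k * (c i x ^ conjExp (p i x))
                ≤ ∑ i, ahat i k * (∑ j, c j x ^ conjExp (p j x)) :=
                  Finset.sum_le_sum fun i _ => mul_le_mul_of_nonneg_left
                    (Finset.single_le_sum (f := fun j => c j x ^ conjExp (p j x))
                      (fun j _ => hT0 j) (Finset.mem_univ i)) (hK0 i)
              _ = (∑ i, ahat i k) * ∑ j, c j x ^ conjExp (p j x) :=
                  (Finset.sum_mul _ _ _).symm
          nlinarith [mul_nonneg hKs0 hTs0]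
  -- finiteness of the lintegrals
  have hgfin : ∀ m, ∫⁻ x in Q, ENNReal.ofReal
      (∑ i, (a x (w m x) (v m x) i - a x (w m x) (vlim x) i) * (v m x i - vlim x i)) ≠ ⊤ := by
    intro m
    have hle : ∫⁻ x in Q, ENNReal.ofReal
        (∑ i, (a x (w m x) (v m x) i - a x (w m x) (vlim x) i) * (v m x i - vlim x i))
        ≤ ∫⁻ x in Q, (ENNReal.ofReal (6 * ∑ i, ahat i k) *
            (ENNReal.ofReal (∑ i, |v m x i| ^ p i x) + ENNReal.ofReal (∑ i, |vlim x i| ^ p i x)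
              + ∑ i, ENNReal.ofReal (c i x ^ conjExp (p i x)))) := by
      apply lintegral_mono_ae
      filter_upwards [hg_bd m] with x hx
      calc ENNReal.ofReal
            (∑ i, (a x (w m x) (v m x) i - a x (w m x) (vlim x) i) * (v m x i - vlim x i))
          ≤ ENNReal.ofReal ((6 * ∑ i, ahat i k) * ((∑ i, |v m x i| ^ p i x)
              + (∑ i, |vlim x i| ^ p i x) + ∑ i, c i x ^ conjExp (p i x))) :=
            ENNReal.ofReal_le_ofReal ((le_abs_self _).trans hx)
        _ = ENNReal.ofReal (6 * ∑ i, ahat i k) * ENNReal.ofReal ((∑ i, |v m x i| ^ p i x)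
              + (∑ i, |vlim x i| ^ p i x) + ∑ i, c i x ^ conjExp (p i x)) :=
            ENNReal.ofReal_mul (by linarith)
        _ ≤ ENNReal.ofReal (6 * ∑ i, ahat i k) *
              (ENNReal.ofReal (∑ i, |v m x i| ^ p i x)
                + ENNReal.ofReal (∑ i, |vlim x i| ^ p i x)
                + ∑ i, ENNReal.ofReal (c i x ^ conjExp (p i x))) := by
            apply mul_le_mul_right
            calc ENNReal.ofReal ((∑ i, |v m x i| ^ p i x) + (∑ i, |vlim x i| ^ p i x)
                  + ∑ i, c i x ^ conjExp (p i x))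
                ≤ ENNReal.ofReal ((∑ i, |v m x i| ^ p i x) + (∑ i, |vlim x i| ^ p i x))
                  + ENNReal.ofReal (∑ i, c i x ^ conjExp (p i x)) := ENNReal.ofReal_add_le
              _ ≤ (ENNReal.ofReal (∑ i, |v m x i| ^ p i x)
                    + ENNReal.ofReal (∑ i, |vlim x i| ^ p i x))
                  + ∑ i, ENNReal.ofReal (c i x ^ conjExp (p i x)) :=
                add_le_add ENNReal.ofReal_add_le (ofReal_sum_le _ _)
    refine ne_of_lt (lt_of_le_of_lt hle ?_)
    rw [lintegral_const_mul' _ _ ENNReal.ofReal_ne_top]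
    apply ENNReal.mul_lt_top ENNReal.ofReal_lt_top
    rw [lintegral_add_left ((hSmeas m).ennreal_ofReal.fun_add hSlmeas.ennreal_ofReal),
      lintegral_add_left (hSmeas m).ennreal_ofReal,
      lintegral_finset_sum _ (fun i _ => (hTmeas i).ennreal_ofReal)]
    refine ENNReal.add_lt_top.mpr ⟨ENNReal.add_lt_top.mpr ⟨lt_of_le_of_lt (hv_mod m) hB,
      hvlim_mod⟩, ?_⟩
    exact ENNReal.sum_lt_top.mpr fun i _ => hc_int i
  -- extract the subsequence
  obtain ⟨φ, hφmono, hφae⟩ := subseq_ae_zero (volume.restrict Q)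
    (fun m x => ∑ i, (a x (w m x) (v m x) i - a x (w m x) (vlim x) i) * (v m x i - vlim x i))
    hgmeas hgnn hgfin hlim
  refine ⟨φ, hφmono, ?_⟩
  filter_upwards [hφae, ha_cont, hgrowth, hmono, hcoer, hpb,
    ae_all_iff.mpr hc_nonneg, ae_all_iff.mpr hw_bd, hw_ae]
    with x hx0 hxcont hxgr hxmono hxcoer hxpb hxc hxw hxwlim
  have hq : ∀ i, 1 < p i x := fun i => lt_of_lt_of_le (hpm i) (hxpb i).1
  exact ptwise (fun i => p i x) (fun i => 1 / conjExp (p i x)) hq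
    (fun i => div_pos one_pos (conjExp_pos (hq i)))
    (fun i => by
      show 1 / conjExp (p i x) < 1
      rw [one_div]; exact inv_lt_one_of_one_lt₀ (conjExp_gt_one (hq i)))
    (a x) hxcont k (fun i => ahat i k) (fun i => c i x)
    (fun i => (hahat_pos i k hk.le).le) hxc
    (fun s hs ξ i => le_trans (hxgr s ξ i) (mul_le_mul_of_nonneg_right
      (hahat_mono i (Set.mem_Ici.mpr (abs_nonneg _)) (Set.mem_Ici.mpr hk.le) hs)
      (add_nonneg (Real.rpow_nonneg (Finset.sum_nonneg fun j _ =>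
        Real.rpow_nonneg (abs_nonneg _) _) _) (hxc i))))
    hxmono α hα hxcoer (fun n => w (φ n) x) (fun n => hxw (φ n)) (wlim x)
    (hxwlim.comp hφmono.tendsto_atTop) (fun n => v (φ n) x) (vlim x) hx0
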